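/- arXiv:2405.07331 — 4 statements merged into one kernel-verified Lean document; each statement's English description precedes it below -/
import Mathlib

section
/- Let Θ* ∈ ℝ^{k×d} have unit-norm rows θ_1*, …, θ_k*, and let x* be a maximizer of f_{Θ*} over the unit sphere S^{d−1}. Then min_{i∈[k]} |θ_i*ᵀ x*| > 0, i.e., θ_i*ᵀ x* ≠ 0 for every i ∈ [k]. -/
open MeasureTheory

/-- ReLU activation g(z) = z·𝟙(z ≥ 0). -/
noncomputable def relu (z : ℝ) : ℝ := if 0 ≤ z then z else 0

/-- One-layer ReLU network f_Θ(x) = Σ_i g(θ_iᵀ x). -/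
noncomputable def reluNet {k d : ℕ} (Θ : Fin k → EuclideanSpace ℝ (Fin d))
    (x : EuclideanSpace ℝ (Fin d)) : ℝ :=
  ∑ i, relu (inner ℝ (Θ i) x : ℝ)

lemma relu_eq_max (z : ℝ) : relu z = max z 0 := by
  unfold relu
  rcases le_or_gt 0 z with h | h
  · rw [if_pos h, max_eq_left h]
  · rw [if_neg (not_le.mpr h), max_eq_right h.le]

lemma relu_nonneg (z : ℝ) : 0 ≤ relu z := by
  rw [relu_eq_max]; exact le_max_right _ _

lemma relu_smul (c z : ℝ) (hc : 0 ≤ c) : relu (c * z) = c * relu z := by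
  rw [relu_eq_max, relu_eq_max]
  rcases le_or_gt 0 z with h | h
  · rw [max_eq_left h, max_eq_left (mul_nonneg hc h)]
  · rw [max_eq_right h.le, max_eq_right (mul_nonpos_of_nonneg_of_nonpos hc h.le), mul_zero]

lemma relu_convex (a b : ℝ) : 2 * relu a ≤ relu (a + b) + relu (a - b) := by
  simp only [relu_eq_max]
  rcases le_or_gt 0 a with h | h <;> rcases le_or_gt 0 b with h2 | h2 <;>
    simp [max_def] <;> split_ifs <;> linarith

lemma reluNet_nonneg {k d : ℕ} (Θ : Fin k → EuclideanSpace ℝ (Fin d)) (x) :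
    0 ≤ reluNet Θ x :=
  Finset.sum_nonneg fun _ _ => relu_nonneg _

lemma reluNet_smul {k d : ℕ} (Θ : Fin k → EuclideanSpace ℝ (Fin d)) (c : ℝ) (hc : 0 ≤ c)
    (x : EuclideanSpace ℝ (Fin d)) : reluNet Θ (c • x) = c * reluNet Θ x := by
  unfold reluNet
  rw [Finset.mul_sum]
  refine Finset.sum_congr rfl fun j _ => ?_
  rw [real_inner_smul_right, relu_smul _ _ hc]

theorem stmt_2 (d k : ℕ)
    (Θs : Fin k → EuclideanSpace ℝ (Fin d))
    (hΘs : ∀ i, ‖Θs i‖ = 1)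
    (xs : EuclideanSpace ℝ (Fin d))
    (hxs : xs ∈ Metric.sphere (0 : EuclideanSpace ℝ (Fin d)) 1)
    (hmax : ∀ x ∈ Metric.sphere (0 : EuclideanSpace ℝ (Fin d)) 1,
      reluNet Θs x ≤ reluNet Θs xs) :
    ∀ i : Fin k, (inner ℝ (Θs i) xs : ℝ) ≠ 0 := by
  intro i hzero
  rw [mem_sphere_zero_iff_norm] at hxs
  set M := reluNet Θs xs with hM
  have hM0 : 0 ≤ M := reluNet_nonneg _ _
  set t : ℝ := 1 / (M + 1) with ht
  have htpos : 0 < t := by positivity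
  -- bound f(y) ≤ ‖y‖ * M for any y ≠ 0
  have hbound : ∀ y : EuclideanSpace ℝ (Fin d), y ≠ 0 → reluNet Θs y ≤ ‖y‖ * M := by
    intro y hy
    have hny : (0:ℝ) < ‖y‖ := norm_pos_iff.mpr hy
    have hu : (‖y‖⁻¹ • y) ∈ Metric.sphere (0 : EuclideanSpace ℝ (Fin d)) 1 := by
      rw [mem_sphere_zero_iff_norm, norm_smul, norm_inv, norm_norm]
      field_simp
    have := hmax _ hu
    have hrw : reluNet Θs (‖y‖⁻¹ • y) = ‖y‖⁻¹ * reluNet Θs y :=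
      reluNet_smul _ _ (by positivity) _
    rw [hrw] at this
    calc reluNet Θs y = ‖y‖ * (‖y‖⁻¹ * reluNet Θs y) := by field_simp
    _ ≤ ‖y‖ * M := by apply mul_le_mul_of_nonneg_left this hny.le
  set yp : EuclideanSpace ℝ (Fin d) := xs + t • Θs i with hyp
  set ym : EuclideanSpace ℝ (Fin d) := xs - t • Θs i with hym
  have hθx : (inner ℝ xs (Θs i) : ℝ) = 0 := by rw [real_inner_comm]; exact hzero
  have hnθ : ‖Θs i‖ = 1 := hΘs i
  have hnp2 : ‖yp‖^2 = 1 + t^2 := by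
    rw [hyp, norm_add_sq_real, real_inner_smul_right, hθx, norm_smul, hxs, hnθ]
    simp [mul_pow, abs_of_pos htpos]
  have hnm2 : ‖ym‖^2 = 1 + t^2 := by
    rw [hym, norm_sub_sq_real, real_inner_smul_right, hθx, norm_smul, hxs, hnθ]
    simp [mul_pow, abs_of_pos htpos]
  have h1t : (0:ℝ) < 1 + t^2 := by positivity
  have hnp : ‖yp‖ = Real.sqrt (1 + t^2) := by
    rw [← hnp2, Real.sqrt_sq (norm_nonneg _)]
  have hnm : ‖ym‖ = Real.sqrt (1 + t^2) := by
    rw [← hnm2, Real.sqrt_sq (norm_nonneg _)]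
  have hypne : yp ≠ 0 := by
    intro h; rw [h, norm_zero] at hnp2; simp at hnp2; nlinarith
  have hymne : ym ≠ 0 := by
    intro h; rw [h, norm_zero] at hnm2; simp at hnm2; nlinarith
  -- lower bound on f(yp) + f(ym)
  have hlow : 2 * M + t ≤ reluNet Θs yp + reluNet Θs ym := by
    have hsum : reluNet Θs yp + reluNet Θs ym
        = ∑ j, (relu (inner ℝ (Θs j) yp : ℝ) + relu (inner ℝ (Θs j) ym : ℝ)) := by
      rw [reluNet, reluNet, ← Finset.sum_add_distrib]
    have hterm : ∀ j : Fin k,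
        2 * relu (inner ℝ (Θs j) xs : ℝ) + (if j = i then t else 0)
          ≤ relu (inner ℝ (Θs j) yp : ℝ) + relu (inner ℝ (Θs j) ym : ℝ) := by
      intro j
      have hip : (inner ℝ (Θs j) yp : ℝ) = (inner ℝ (Θs j) xs : ℝ) + t * (inner ℝ (Θs j) (Θs i) : ℝ) := by
        rw [hyp, inner_add_right, real_inner_smul_right]
      have him : (inner ℝ (Θs j) ym : ℝ) = (inner ℝ (Θs j) xs : ℝ) - t * (inner ℝ (Θs j) (Θs i) : ℝ) := by
        rw [hym, inner_sub_right, real_inner_smul_right]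
      rw [hip, him]
      by_cases hji : j = i
      · subst hji
        have hself : (inner ℝ (Θs j) (Θs j) : ℝ) = 1 := by
          rw [real_inner_self_eq_norm_sq, hΘs j]; norm_num
        rw [if_pos rfl, hzero, hself, mul_one]
        simp only [zero_add, zero_sub]
        rw [relu_eq_max, relu_eq_max, relu_eq_max,
          max_eq_left htpos.le, max_eq_right (neg_nonpos.mpr htpos.le)]
        simp
      · rw [if_neg hji, add_zero]
        exact relu_convex _ _
    calc 2 * M + t
        = ∑ j, (2 * relu (inner ℝ (Θs j) xs : ℝ) + (if j = i then t else 0)) := by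
          rw [Finset.sum_add_distrib, ← Finset.mul_sum, Finset.sum_ite_eq']
          simp [hM, reluNet]
    _ ≤ ∑ j, (relu (inner ℝ (Θs j) yp : ℝ) + relu (inner ℝ (Θs j) ym : ℝ)) :=
          Finset.sum_le_sum fun j _ => hterm j
    _ = reluNet Θs yp + reluNet Θs ym := hsum.symm
  -- upper bound
  have hup : reluNet Θs yp + reluNet Θs ym ≤ 2 * Real.sqrt (1 + t^2) * M := by
    have h1 := hbound yp hypne
    have h2 := hbound ym hymne
    rw [hnp] at h1; rw [hnm] at h2
    linarith
  have hsqrt : Real.sqrt (1 + t^2) ≤ 1 + t^2 / 2 := by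
    rw [show (1 + t^2/2 : ℝ) = Real.sqrt ((1 + t^2/2)^2) from
      (Real.sqrt_sq (by positivity)).symm]
    apply Real.sqrt_le_sqrt; nlinarith [sq_nonneg t]
  have hfin : t ≤ t^2 * M := by nlinarith
  have htM : t * (M + 1) = 1 := by rw [ht]; field_simp
  nlinarith [sq_nonneg (M + 1), mul_pos htpos htpos]
end

section
/- Let g : ℝ → ℝ denote the ReLU activation g(z) = z·𝟙(z ≥ 0), and let ε > 0. Then for any β₀, β₁ ∈ ℝ, ∫_{−ε}^{ε} |(β₀ + β₁ w) − g(w)| dw ≥ ε²/8. -/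
open MeasureTheory intervalIntegral

lemma continuous_relu : Continuous relu := by
  have h : relu = fun z => max z 0 := by
    funext z
    unfold relu
    rcases le_or_gt 0 z with h | h
    · simp [h, max_eq_left h]
    · simp [not_le.2 h, max_eq_right h.le]
  rw [h]; exact continuous_id.max continuous_const

theorem stmt_5 (ε : ℝ) (hε : 0 < ε) (β₀ β₁ : ℝ) :
    ε^2 / 8 ≤ ∫ w in Set.Icc (-ε) ε, |(β₀ + β₁ * w) - relu w| := by
  have hc : Continuous fun w => |(β₀ + β₁ * w) - relu w| :=
    ((continuous_const.add (continuous_const.mul continuous_id)).sub continuous_relu).abs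
  have hi : ∀ a b : ℝ, IntervalIntegrable (fun w => |(β₀ + β₁ * w) - relu w|) volume a b :=
    fun a b => hc.intervalIntegrable a b
  have hIcc : ∫ w in Set.Icc (-ε) ε, |(β₀ + β₁ * w) - relu w|
      = ∫ w in (-ε)..ε, |(β₀ + β₁ * w) - relu w| := by
    rw [intervalIntegral.integral_of_le (by linarith), integral_Icc_eq_integral_Ioc]
  have key_neg : ∀ a b : ℝ, a ≤ b → b ≤ 0 →
      |β₀ * (b - a) + β₁ * ((b ^ 2 - a ^ 2) / 2)|
        ≤ ∫ w in a..b, |(β₀ + β₁ * w) - relu w| := by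
    intro a b hab hb0
    have hcong : ∫ w in a..b, |(β₀ + β₁ * w) - relu w|
        = ∫ w in a..b, |β₀ + β₁ * w| := by
      apply intervalIntegral.integral_congr
      intro x hx
      rw [Set.uIcc_of_le hab] at hx
      have hx0 : x ≤ 0 := le_trans hx.2 hb0
      rcases eq_or_lt_of_le hx0 with h | h
      · simp [relu, h]
      · simp [relu, not_le.2 h]
    rw [hcong]
    have habs := intervalIntegral.abs_integral_le_integral_abs
      (f := fun w => β₀ + β₁ * w) (μ := volume) hab
    have hval : ∫ w in a..b, (β₀ + β₁ * w)
        = β₀ * (b - a) + β₁ * ((b ^ 2 - a ^ 2) / 2) := by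
      rw [intervalIntegral.integral_add intervalIntegrable_const
        ((by continuity : Continuous fun w : ℝ => β₁ * w).intervalIntegrable a b),
        intervalIntegral.integral_const, intervalIntegral.integral_const_mul, integral_id]
      simp only [smul_eq_mul]
      ring
    rw [hval] at habs
    exact habs
  have key_pos : ∀ a b : ℝ, 0 ≤ a → a ≤ b →
      |β₀ * (b - a) + (β₁ - 1) * ((b ^ 2 - a ^ 2) / 2)|
        ≤ ∫ w in a..b, |(β₀ + β₁ * w) - relu w| := by
    intro a b ha0 hab
    have hcong : ∫ w in a..b, |(β₀ + β₁ * w) - relu w|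
        = ∫ w in a..b, |β₀ + (β₁ - 1) * w| := by
      apply intervalIntegral.integral_congr
      intro x hx
      rw [Set.uIcc_of_le hab] at hx
      have hx0 : 0 ≤ x := le_trans ha0 hx.1
      show |β₀ + β₁ * x - relu x| = |β₀ + (β₁ - 1) * x|
      rw [show relu x = x from if_pos hx0, show β₀ + β₁ * x - x = β₀ + (β₁ - 1) * x from by ring]
    rw [hcong]
    have habs := intervalIntegral.abs_integral_le_integral_abs
      (f := fun w => β₀ + (β₁ - 1) * w) (μ := volume) hab
    have hval : ∫ w in a..b, (β₀ + (β₁ - 1) * w)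
        = β₀ * (b - a) + (β₁ - 1) * ((b ^ 2 - a ^ 2) / 2) := by
      rw [intervalIntegral.integral_add intervalIntegrable_const
        ((by continuity : Continuous fun w : ℝ => (β₁ - 1) * w).intervalIntegrable a b),
        intervalIntegral.integral_const, intervalIntegral.integral_const_mul, integral_id]
      simp only [smul_eq_mul]
      ring
    rw [hval] at habs
    exact habs
  -- split into four pieces
  have hsplit : ∫ w in (-ε)..ε, |(β₀ + β₁ * w) - relu w|
      = (∫ w in (-ε)..(-ε/2), |(β₀ + β₁ * w) - relu w|)
      + (∫ w in (-ε/2)..(0:ℝ), |(β₀ + β₁ * w) - relu w|)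
      + (∫ w in (0:ℝ)..(ε/2), |(β₀ + β₁ * w) - relu w|)
      + (∫ w in (ε/2)..ε, |(β₀ + β₁ * w) - relu w|) := by
    rw [intervalIntegral.integral_add_adjacent_intervals (hi (-ε) (-ε/2)) (hi (-ε/2) 0),
      add_assoc, intervalIntegral.integral_add_adjacent_intervals (hi 0 (ε/2)) (hi (ε/2) ε),
      intervalIntegral.integral_add_adjacent_intervals (hi (-ε) 0) (hi 0 ε)]
  rw [hIcc, hsplit]
  have c1 := (neg_le_abs _).trans (key_neg (-ε) (-ε/2) (by linarith) (by linarith))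
  have c2 := (le_abs_self _).trans (key_neg (-ε/2) 0 (by linarith) (by linarith))
  have c3 := (le_abs_self _).trans (key_pos 0 (ε/2) (by linarith) (by linarith))
  have c4 := (neg_le_abs _).trans (key_pos (ε/2) ε (by linarith) (by linarith))
  linarith [c1, c2, c3, c4, sq_nonneg ε]
end

section
/- Let Θ* ∈ ℝ^{k×d} have unit-norm rows θ_1*, …, θ_k*, let Θ̃ ∈ ℝ^{k×d} have rows θ̃_1, …, θ̃_k, and let 0 < ν < 2. Suppose for every i ∈ [k], either ‖θ̃_i − θ_i*‖₂ ≤ ν/2 or ‖θ̃_i + θ_i*‖₂ ≤ ν/2. Then for every x ∈ S^{d−1} with |θ̃_iᵀx| ≥ ν/2 for all i ∈ [k], the following identity holds: f_{Θ*}(x) = Σ_{i∈[k]} 𝟙(θ̃_iᵀx ≥ 0) · θ_i*ᵀx + Σ_{i∈[k]} 2·𝟙(‖θ̃_i + θ_i*‖₂ ≤ ν/2) · (1/2 − 𝟙(θ̃_iᵀx ≥ 0)) · θ_i*ᵀx. -/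
theorem stmt_15 (d k : ℕ)
    (Θs Θt : Fin k → EuclideanSpace ℝ (Fin d))
    (hΘs : ∀ i, ‖Θs i‖ = 1)
    (ν : ℝ) (hν : 0 < ν) (hν2 : ν < 2)
    (hclose : ∀ i : Fin k, ‖Θt i - Θs i‖ ≤ ν / 2 ∨ ‖Θt i + Θs i‖ ≤ ν / 2) :
    ∀ x ∈ Metric.sphere (0 : EuclideanSpace ℝ (Fin d)) 1,
      (∀ i : Fin k, ν / 2 ≤ |(inner ℝ (Θt i) x : ℝ)|) →
      reluNet Θs x =
        (∑ i : Fin k, (if (0:ℝ) ≤ (inner ℝ (Θt i) x : ℝ) then (1:ℝ) else 0) *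
          (inner ℝ (Θs i) x : ℝ))
        + ∑ i : Fin k, 2 * (if ‖Θt i + Θs i‖ ≤ ν / 2 then (1:ℝ) else 0) *
          (1 / 2 - (if (0:ℝ) ≤ (inner ℝ (Θt i) x : ℝ) then (1:ℝ) else 0)) *
          (inner ℝ (Θs i) x : ℝ) := by
  intro x hx hgap
  have hxn : ‖x‖ = 1 := by simpa using mem_sphere_zero_iff_norm.mp hx
  rw [← Finset.sum_add_distrib]
  unfold reluNet
  apply Finset.sum_congr rfl
  intro i _
  set t : ℝ := inner ℝ (Θt i) x with ht
  set s : ℝ := inner ℝ (Θs i) x with hs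
  have hts : |t - s| ≤ ‖Θt i - Θs i‖ := by
    have h := abs_real_inner_le_norm (Θt i - Θs i) x
    rw [inner_sub_left, hxn, mul_one] at h
    exact h
  have htps : |t + s| ≤ ‖Θt i + Θs i‖ := by
    have h := abs_real_inner_le_norm (Θt i + Θs i) x
    rw [inner_add_left, hxn, mul_one] at h
    exact h
  have hgi : ν / 2 ≤ |t| := hgap i
  rcases hclose i with hc | hc
  · -- close to +θs; second indicator is false
    have hne : ¬ ‖Θt i + Θs i‖ ≤ ν / 2 := by
      intro h
      have h2 : (2:ℝ) = ‖(Θt i + Θs i) - (Θt i - Θs i)‖ := by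
        have : (Θt i + Θs i) - (Θt i - Θs i) = (2:ℝ) • Θs i := by module
        rw [this, norm_smul, hΘs i]
        simp
      have := norm_sub_le (Θt i + Θs i) (Θt i - Θs i)
      rw [← h2] at this
      linarith
    rw [if_neg hne]
    have h1 : |t - s| ≤ ν / 2 := le_trans hts hc
    rw [abs_le] at h1
    rcases le_or_gt (ν/2) t with hT | hT
    · have hs0 : 0 ≤ s := by linarith
      rw [relu, if_pos hs0, if_pos (by linarith : (0:ℝ) ≤ t)]
      ring
    · have hT' : t ≤ -(ν/2) := by
        rcases le_abs.mp hgi with h | h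
        · linarith
        · linarith
      have hs0 : s ≤ 0 := by linarith
      rw [relu, if_neg (by linarith : ¬ (0:ℝ) ≤ t)]
      by_cases hz : 0 ≤ s
      · have : s = 0 := le_antisymm hs0 hz
        rw [if_pos hz, this]; ring
      · rw [if_neg hz]; ring
  · rw [if_pos hc]
    have h1 : |t + s| ≤ ν / 2 := le_trans htps hc
    rw [abs_le] at h1
    rcases le_or_gt (ν/2) t with hT | hT
    · have hs0 : s ≤ 0 := by linarith
      rw [relu, if_pos (by linarith : (0:ℝ) ≤ t)]
      by_cases hz : 0 ≤ s
      · have : s = 0 := le_antisymm hs0 hz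
        rw [if_pos hz, this]; ring
      · rw [if_neg hz]; ring
    · have hT' : t ≤ -(ν/2) := by
        rcases le_abs.mp hgi with h | h
        · linarith
        · linarith
      have hs0 : 0 ≤ s := by linarith
      rw [relu, if_pos hs0, if_neg (by linarith : ¬ (0:ℝ) ≤ t)]
      ring
end

section
/- Let Θ* ∈ ℝ^{k×d} have unit-norm rows θ_1*, …, θ_k*, and let x* be a maximizer of f_{Θ*} over the unit sphere S^{d−1}. Let A = { i ∈ [k] : θ_i*ᵀx* > 0 } and θ̄_A = Σ_{i∈A} θ_i*. Then A is nonempty, θ̄_A ≠ 0, and x* = θ̄_A / ‖θ̄_A‖₂, i.e., the aggregate of the activated neurons is a positive multiple of the optimal action. -/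
open MeasureTheory

lemma le_relu (z : ℝ) : z ≤ relu z := by
  unfold relu; split <;> linarith

lemma relu_of_nonpos {z : ℝ} (h : z ≤ 0) : relu z = 0 := by
  unfold relu; split <;> linarith

lemma relu_of_pos {z : ℝ} (h : 0 < z) : relu z = z := by
  unfold relu; split <;> linarith

theorem stmt_19 (d k : ℕ) (hk : 1 ≤ k)
    (Θs : Fin k → EuclideanSpace ℝ (Fin d))
    (hΘs : ∀ i, ‖Θs i‖ = 1)
    (xs : EuclideanSpace ℝ (Fin d))
    (hxs : xs ∈ Metric.sphere (0 : EuclideanSpace ℝ (Fin d)) 1)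
    (hmax : ∀ x ∈ Metric.sphere (0 : EuclideanSpace ℝ (Fin d)) 1,
      reluNet Θs x ≤ reluNet Θs xs) :
    (Finset.univ.filter (fun i : Fin k => 0 < (inner ℝ (Θs i) xs : ℝ))).Nonempty ∧
    (∑ i ∈ Finset.univ.filter (fun i : Fin k => 0 < (inner ℝ (Θs i) xs : ℝ)), Θs i) ≠ 0 ∧
    xs = ‖∑ i ∈ Finset.univ.filter (fun i : Fin k => 0 < (inner ℝ (Θs i) xs : ℝ)), Θs i‖⁻¹ •
      (∑ i ∈ Finset.univ.filter (fun i : Fin k => 0 < (inner ℝ (Θs i) xs : ℝ)), Θs i) := by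
  have hxs1 : ‖xs‖ = 1 := by simpa using hxs
  set A := Finset.univ.filter (fun i : Fin k => 0 < (inner ℝ (Θs i) xs : ℝ)) with hA
  set v := ∑ i ∈ A, Θs i with hv
  have i0 : Fin k := ⟨0, hk⟩
  -- reluNet at xs is at least 1
  have h1 : (1 : ℝ) ≤ reluNet Θs xs := by
    have hmem : Θs i0 ∈ Metric.sphere (0 : EuclideanSpace ℝ (Fin d)) 1 := by
      simp [hΘs i0]
    refine le_trans ?_ (hmax _ hmem)
    unfold reluNet
    have : relu (inner ℝ (Θs i0) (Θs i0) : ℝ) = 1 := by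
      rw [real_inner_self_eq_norm_sq, hΘs i0]
      norm_num [relu]
    calc (1 : ℝ) = relu (inner ℝ (Θs i0) (Θs i0) : ℝ) := this.symm
      _ ≤ ∑ i, relu (inner ℝ (Θs i) (Θs i0) : ℝ) :=
        Finset.single_le_sum (f := fun i => relu (inner ℝ (Θs i) (Θs i0) : ℝ))
          (fun i _ => relu_nonneg _) (Finset.mem_univ i0)
  -- reluNet at xs equals ⟨v, xs⟩
  have h2 : reluNet Θs xs = (inner ℝ v xs : ℝ) := by
    unfold reluNet
    rw [hv, sum_inner]
    rw [← Finset.sum_filter_add_sum_filter_not Finset.univ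
      (fun i : Fin k => 0 < (inner ℝ (Θs i) xs : ℝ))]
    have ha : ∀ i ∈ A, relu (inner ℝ (Θs i) xs : ℝ) = (inner ℝ (Θs i) xs : ℝ) := by
      intro i hi
      exact relu_of_pos (by simpa [hA] using hi)
    have hb : ∀ i ∈ Finset.univ.filter (fun i : Fin k => ¬ 0 < (inner ℝ (Θs i) xs : ℝ)),
        relu (inner ℝ (Θs i) xs : ℝ) = 0 := by
      intro i hi
      have : ¬ 0 < (inner ℝ (Θs i) xs : ℝ) := by simpa using hi
      exact relu_of_nonpos (le_of_not_gt this)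
    rw [Finset.sum_congr rfl ha, Finset.sum_congr rfl hb]
    simp [hA]
  have hvxs : 0 < (inner ℝ v xs : ℝ) := by rw [← h2]; linarith
  have hvne : v ≠ 0 := by
    intro h
    rw [h] at hvxs
    simp at hvxs
  have hAne : A.Nonempty := by
    by_contra h
    rw [Finset.not_nonempty_iff_eq_empty] at h
    rw [hv, h] at hvne
    simp at hvne
  have hvnorm : 0 < ‖v‖ := norm_pos_iff.mpr hvne
  -- compare with v/‖v‖
  have h3 : ‖v‖ ≤ reluNet Θs xs := by
    have hmem : ‖v‖⁻¹ • v ∈ Metric.sphere (0 : EuclideanSpace ℝ (Fin d)) 1 := by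
      simp [norm_smul, abs_of_pos (inv_pos.mpr hvnorm), inv_mul_cancel₀ hvnorm.ne']
    refine le_trans ?_ (hmax _ hmem)
    unfold reluNet
    calc ‖v‖ = ‖v‖⁻¹ * (inner ℝ v v : ℝ) := by
          rw [real_inner_self_eq_norm_sq]; field_simp
      _ = ∑ i ∈ A, (inner ℝ (Θs i) (‖v‖⁻¹ • v) : ℝ) := by
          rw [← sum_inner, ← hv, real_inner_smul_right]
      _ ≤ ∑ i ∈ A, relu (inner ℝ (Θs i) (‖v‖⁻¹ • v) : ℝ) :=
          Finset.sum_le_sum (fun i _ => le_relu _)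
      _ ≤ ∑ i, relu (inner ℝ (Θs i) (‖v‖⁻¹ • v) : ℝ) :=
          Finset.sum_le_sum_of_subset_of_nonneg (Finset.subset_univ A)
            (fun i _ _ => relu_nonneg _)
  have h4 : (inner ℝ v xs : ℝ) ≤ ‖v‖ := by
    calc (inner ℝ v xs : ℝ) ≤ ‖v‖ * ‖xs‖ := real_inner_le_norm v xs
      _ = ‖v‖ := by rw [hxs1, mul_one]
  have heq : (inner ℝ v xs : ℝ) = ‖v‖ * ‖xs‖ := by
    rw [hxs1, mul_one]; linarith [h2 ▸ h3]
  have := (inner_eq_norm_mul_iff_real).mp heq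
  -- ‖xs‖ • v = ‖v‖ • xs
  rw [hxs1, one_smul] at this
  refine ⟨hAne, hvne, ?_⟩
  show xs = ‖v‖⁻¹ • v
  rw [this, norm_smul, hxs1, mul_one, Real.norm_eq_abs, abs_of_pos hvnorm,
    smul_smul, inv_mul_cancel₀ hvnorm.ne', one_smul]
end
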